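/- Let p > 1, 1 < q < p, A > 0, B > 0, D > 0, η > 0. If t₀ > 0 satisfies (p−1) A t₀^{p−1} = η (q−1) B t₀^{q−1} and t₀^{p−1} ≥ ((q−1)/(p−q))(D/A), then η ≥ [(p−1)/((p−q)^{(p−q)/(p−1)} (q−1)^{(q−1)/(p−1)})] · A^{(q−1)/(p−1)} D^{(p−q)/(p−1)} / B. -/

import Mathlib

theorem stmt5 (p q A B D η t₀ : ℝ) (hp : 1 < p) (hq : 1 < q) (hqp : q < p)
    (hA : 0 < A) (hB : 0 < B) (hD : 0 < D) (hη : 0 < η) (ht₀ : 0 < t₀)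
    (hcrit : (p - 1) * A * t₀ ^ (p - 1) = η * (q - 1) * B * t₀ ^ (q - 1))
    (ht₀ge : t₀ ^ (p - 1) ≥ ((q - 1) / (p - q)) * (D / A)) :
    η ≥ (p - 1) / ((p - q) ^ ((p - q) / (p - 1)) * (q - 1) ^ ((q - 1) / (p - 1))) *
      (A ^ ((q - 1) / (p - 1)) * D ^ ((p - q) / (p - 1)) / B) := by
  set α := (p - q) / (p - 1) with hα
  set β := (q - 1) / (p - 1) with hβ
  have hp1 : (0:ℝ) < p - 1 := by linarith
  have hq1 : (0:ℝ) < q - 1 := by linarith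
  have hpq : (0:ℝ) < p - q := by linarith
  have hαpos : 0 < α := div_pos hpq hp1
  have hβpos : 0 < β := div_pos hq1 hp1
  have hαβ : α + β = 1 := by rw [hα, hβ]; field_simp; ring
  -- cancel t₀^(q-1) in hcrit
  have hsplit : t₀ ^ (p - 1) = t₀ ^ (p - q) * t₀ ^ (q - 1) := by
    rw [← Real.rpow_add ht₀]; ring_nf
  have htq : (0:ℝ) < t₀ ^ (q - 1) := Real.rpow_pos_of_pos ht₀ _
  have hcrit' : (p - 1) * A * t₀ ^ (p - q) = η * ((q - 1) * B) := by
    have h := hcrit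
    rw [hsplit] at h
    exact mul_right_cancel₀ (ne_of_gt htq)
      (by linarith [h] :
        ((p - 1) * A * t₀ ^ (p - q)) * t₀ ^ (q - 1) = (η * ((q - 1) * B)) * t₀ ^ (q - 1))
  set C := ((q - 1) / (p - q)) * (D / A) with hC
  have hCpos : (0:ℝ) < C := mul_pos (div_pos hq1 hpq) (div_pos hD hA)
  have hpow : (t₀ ^ (p - 1)) ^ α = t₀ ^ (p - q) := by
    rw [← Real.rpow_mul ht₀.le]
    congr 1
    rw [hα]; field_simp
  have hbound : C ^ α ≤ t₀ ^ (p - q) := by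
    rw [← hpow]
    exact Real.rpow_le_rpow hCpos.le ht₀ge hαpos.le
  have hfin : (p - 1) * A * C ^ α ≤ η * ((q - 1) * B) := by
    rw [← hcrit']
    have : (0:ℝ) < (p - 1) * A := mul_pos hp1 hA
    nlinarith [hbound]
  -- key algebraic identity
  have hCα : C ^ α = (q - 1) ^ α * D ^ α / ((p - q) ^ α * A ^ α) := by
    rw [hC, Real.mul_rpow (by positivity) (by positivity),
      Real.div_rpow hq1.le hpq.le, Real.div_rpow hD.le hA.le]
    field_simp
  have hAsplit : A = A ^ α * A ^ β := by
    rw [← Real.rpow_add hA, hαβ, Real.rpow_one]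
  have hqsplit : q - 1 = (q - 1) ^ α * (q - 1) ^ β := by
    rw [← Real.rpow_add hq1, hαβ, Real.rpow_one]
  have hEq : (p - 1) / ((p - q) ^ α * (q - 1) ^ β) * (A ^ β * D ^ α / B)
      = (p - 1) * A * C ^ α / ((q - 1) * B) := by
    rw [hCα]
    have h1 : (0:ℝ) < (p - q) ^ α := Real.rpow_pos_of_pos hpq _
    have h2 : (0:ℝ) < (q - 1) ^ α := Real.rpow_pos_of_pos hq1 _
    have h3 : (0:ℝ) < (q - 1) ^ β := Real.rpow_pos_of_pos hq1 _
    have h4 : (0:ℝ) < A ^ α := Real.rpow_pos_of_pos hA _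
    have h5 : (0:ℝ) < A ^ β := Real.rpow_pos_of_pos hA _
    set x := A ^ α
    set y := A ^ β
    set u := (q - 1) ^ α
    set v := (q - 1) ^ β
    set w := (p - q) ^ α
    set d := D ^ α
    rw [hqsplit, hAsplit]
    field_simp
  rw [ge_iff_le, hEq, div_le_iff₀ (by positivity)]
  linarith [hfin]
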